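/- There exists an absolute constant C > 0 such that for all complex numbers z, w with Re z > −1/2, Re w > −1/2 and |w| ≤ |z|, one has | z^{1/2}·(1−z)·(1−6w+w²) − w^{1/2}·(1−w)·(1−6z+z²) | ≤ C·|z|^{1/2}·|1+z|^{3/2}·|1+w|^{3/2}, where the square roots are taken with respect to the principal branch of the complex power. -/

import Mathlib

set_option maxHeartbeats 1000000

/-- The key kernel estimate on the half-plane `Re z > -1/2`: there is an absolute
constant `C > 0` with
`|z^{1/2}(1-z)(1-6w+w²) - w^{1/2}(1-w)(1-6z+z²)| ≤ C |z|^{1/2} |1+z|^{3/2} |1+w|^{3/2}`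
whenever `Re z, Re w > -1/2` and `|w| ≤ |z|` (principal branch square roots). -/
theorem kernel_estimate_half_plane :
    ∃ C : ℝ, 0 < C ∧ ∀ z w : ℂ, -(1 / 2 : ℝ) < z.re → -(1 / 2 : ℝ) < w.re →
      ‖w‖ ≤ ‖z‖ →
      ‖z ^ ((1 : ℂ) / 2) * (1 - z) * (1 - 6 * w + w ^ 2)
          - w ^ ((1 : ℂ) / 2) * (1 - w) * (1 - 6 * z + z ^ 2)‖
        ≤ C * ‖z‖ ^ ((1 : ℝ) / 2) * ‖1 + z‖ ^ ((3 : ℝ) / 2) *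
            ‖1 + w‖ ^ ((3 : ℝ) / 2) := by
  refine ⟨1470, by norm_num, fun z w hz hw hle => ?_⟩
  set a := ‖z‖ with ha
  set b := ‖w‖ with hb
  set A := ‖1 + z‖ with hA
  set B := ‖1 + w‖ with hB
  have ha0 : 0 ≤ a := norm_nonneg z
  have hb0 : 0 ≤ b := norm_nonneg w
  have hA2 : (1 : ℝ) / 2 ≤ A := by
    have h1 : (1 : ℝ) / 2 ≤ (1 + z).re := by
      simp only [Complex.add_re, Complex.one_re]; linarith
    exact h1.trans (Complex.re_le_norm _)
  have hB2 : (1 : ℝ) / 2 ≤ B := by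
    have h1 : (1 : ℝ) / 2 ≤ (1 + w).re := by
      simp only [Complex.add_re, Complex.one_re]; linarith
    exact h1.trans (Complex.re_le_norm _)
  have hA0 : 0 < A := by linarith
  have hB0 : 0 < B := by linarith
  -- basic triangle inequalities
  have haA : a ≤ A + 1 := by
    calc a = ‖(1 + z) - 1‖ := by ring_nf; rfl
    _ ≤ A + ‖(1 : ℂ)‖ := norm_sub_le _ _
    _ = A + 1 := by simp
  have hbB : b ≤ B + 1 := by
    calc b = ‖(1 + w) - 1‖ := by ring_nf; rfl
    _ ≤ B + ‖(1 : ℂ)‖ := norm_sub_le _ _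
    _ = B + 1 := by simp
  have hAa : A ≤ 1 + a := by
    calc A ≤ ‖(1 : ℂ)‖ + a := norm_add_le _ _
    _ = 1 + a := by simp
  have hBb : B ≤ 1 + b := by
    calc B ≤ ‖(1 : ℂ)‖ + b := norm_add_le _ _
    _ = 1 + b := by simp
  -- bounds on the factors
  have h1z : ‖1 - z‖ ≤ 5 * A := by
    have he : (1 - z) = 2 - (1 + z) := by ring
    calc ‖1 - z‖ = ‖2 - (1 + z)‖ := by rw [he]
    _ ≤ ‖(2 : ℂ)‖ + A := norm_sub_le _ _
    _ = 2 + A := by norm_num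
    _ ≤ 5 * A := by linarith
  have h1w : ‖1 - w‖ ≤ 5 * B := by
    have he : (1 - w) = 2 - (1 + w) := by ring
    calc ‖1 - w‖ = ‖2 - (1 + w)‖ := by rw [he]
    _ ≤ ‖(2 : ℂ)‖ + B := norm_sub_le _ _
    _ = 2 + B := by norm_num
    _ ≤ 5 * B := by linarith
  have hqw : ‖1 - 6 * w + w ^ 2‖ ≤ 49 * B ^ 2 := by
    have he : (1 - 6 * w + w ^ 2) = (1 + w) ^ 2 - 8 * w := by ring
    calc ‖1 - 6 * w + w ^ 2‖
        = ‖(1 + w) ^ 2 - 8 * w‖ := by rw [he]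
    _ ≤ ‖(1 + w) ^ 2‖ + ‖8 * w‖ := norm_sub_le _ _
    _ = B ^ 2 + 8 * b := by rw [norm_pow, norm_mul]; norm_num; rfl
    _ ≤ 49 * B ^ 2 := by nlinarith
  have hqz : ‖1 - 6 * z + z ^ 2‖ ≤ 49 * A ^ 2 := by
    have he : (1 - 6 * z + z ^ 2) = (1 + z) ^ 2 - 8 * z := by ring
    calc ‖1 - 6 * z + z ^ 2‖
        = ‖(1 + z) ^ 2 - 8 * z‖ := by rw [he]
    _ ≤ ‖(1 + z) ^ 2‖ + ‖8 * z‖ := norm_sub_le _ _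
    _ = A ^ 2 + 8 * a := by rw [norm_pow, norm_mul]; norm_num; rfl
    _ ≤ 49 * A ^ 2 := by nlinarith
  -- absolute values of the square roots
  have hza : ‖z ^ ((1 : ℂ) / 2)‖ = Real.sqrt a := by
    rw [show ((1 : ℂ) / 2) = (((1 : ℝ) / 2 : ℝ) : ℂ) by norm_num,
      Complex.norm_cpow_real, ← Real.sqrt_eq_rpow]
  have hwa : ‖w ^ ((1 : ℂ) / 2)‖ = Real.sqrt b := by
    rw [show ((1 : ℂ) / 2) = (((1 : ℝ) / 2 : ℝ) : ℂ) by norm_num,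
      Complex.norm_cpow_real, ← Real.sqrt_eq_rpow]
  -- sqrt variables
  set sa := Real.sqrt a with hsa
  set sb := Real.sqrt b with hsb
  set sA := Real.sqrt A with hsA
  set sB := Real.sqrt B with hsB
  have hsa0 : 0 ≤ sa := Real.sqrt_nonneg _
  have hsb0 : 0 ≤ sb := Real.sqrt_nonneg _
  have hsA0 : 0 ≤ sA := Real.sqrt_nonneg _
  have hsB0 : 0 ≤ sB := Real.sqrt_nonneg _
  have hsA2 : sA ^ 2 = A := Real.sq_sqrt hA0.le
  have hsB2 : sB ^ 2 = B := Real.sq_sqrt hB0.le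
  have hba : sb ≤ sa := Real.sqrt_le_sqrt hle
  -- key sqrt comparisons
  have hkey1 : sB ≤ 3 * sA := by
    have h9 : B ≤ 9 * A := by nlinarith
    calc sB ≤ Real.sqrt (9 * A) := Real.sqrt_le_sqrt h9
    _ = Real.sqrt 9 * sA := Real.sqrt_mul (by norm_num) _
    _ = 3 * sA := by
        rw [show (9 : ℝ) = 3 ^ 2 by norm_num, Real.sqrt_sq (by norm_num : (0:ℝ) ≤ 3)]
  have hkey2 : sb * sA ≤ 3 * (sa * sB) := by
    have h9 : b * A ≤ 9 * (a * B) := by nlinarith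
    calc sb * sA = Real.sqrt (b * A) := (Real.sqrt_mul hb0 _).symm
    _ ≤ Real.sqrt (9 * (a * B)) := Real.sqrt_le_sqrt h9
    _ = Real.sqrt 9 * Real.sqrt (a * B) := Real.sqrt_mul (by norm_num) _
    _ = 3 * (sa * sB) := by
        rw [show (9 : ℝ) = 3 ^ 2 by norm_num, Real.sqrt_sq (by norm_num : (0:ℝ) ≤ 3),
          Real.sqrt_mul ha0]
  -- rewrite the right-hand side
  have hrhs : (1470 : ℝ) * a ^ ((1 : ℝ) / 2) * A ^ ((3 : ℝ) / 2) * B ^ ((3 : ℝ) / 2)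
      = 1470 * sa * (A * sA) * (B * sB) := by
    have h32 : ∀ x : ℝ, 0 < x → x ^ ((3 : ℝ) / 2) = x * Real.sqrt x := by
      intro x hx
      rw [show (3 : ℝ) / 2 = 1 + 1 / 2 by norm_num, Real.rpow_add hx, Real.rpow_one,
        Real.sqrt_eq_rpow]
    rw [h32 A hA0, h32 B hB0, ← Real.sqrt_eq_rpow]
  rw [hrhs]
  -- triangle inequality for the main expression
  have hT : ‖z ^ ((1 : ℂ) / 2) * (1 - z) * (1 - 6 * w + w ^ 2)
        - w ^ ((1 : ℂ) / 2) * (1 - w) * (1 - 6 * z + z ^ 2)‖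
      ≤ sa * (5 * A) * (49 * B ^ 2) + sb * (5 * B) * (49 * A ^ 2) := by
    calc ‖z ^ ((1 : ℂ) / 2) * (1 - z) * (1 - 6 * w + w ^ 2)
          - w ^ ((1 : ℂ) / 2) * (1 - w) * (1 - 6 * z + z ^ 2)‖
        ≤ ‖z ^ ((1 : ℂ) / 2) * (1 - z) * (1 - 6 * w + w ^ 2)‖
          + ‖w ^ ((1 : ℂ) / 2) * (1 - w) * (1 - 6 * z + z ^ 2)‖ :=
          norm_sub_le _ _
    _ = sa * ‖1 - z‖ * ‖1 - 6 * w + w ^ 2‖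
          + sb * ‖1 - w‖ * ‖1 - 6 * z + z ^ 2‖ := by
          rw [norm_mul, norm_mul, norm_mul, norm_mul, hza, hwa]
    _ ≤ sa * (5 * A) * (49 * B ^ 2) + sb * (5 * B) * (49 * A ^ 2) := by
          have h1 := norm_nonneg (1 - z)
          have h2 := norm_nonneg (1 - w)
          have h3 := norm_nonneg (1 - 6 * w + w ^ 2)
          have h4 := norm_nonneg (1 - 6 * z + z ^ 2)
          gcongr
  refine hT.trans ?_
  -- final polynomial inequality in the sqrt variables
  rw [← hsA2, ← hsB2]
  have t1 : (245 : ℝ) * (sa * sA ^ 2 * sB ^ 4) ≤ 735 * (sa * sA ^ 3 * sB ^ 3) := by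
    calc (245 : ℝ) * (sa * sA ^ 2 * sB ^ 4)
        = (245 * sa * sA ^ 2 * sB ^ 3) * sB := by ring
    _ ≤ (245 * sa * sA ^ 2 * sB ^ 3) * (3 * sA) :=
        mul_le_mul_of_nonneg_left hkey1 (by positivity)
    _ = 735 * (sa * sA ^ 3 * sB ^ 3) := by ring
  have t2 : (245 : ℝ) * (sb * sB ^ 2 * sA ^ 4) ≤ 735 * (sa * sA ^ 3 * sB ^ 3) := by
    calc (245 : ℝ) * (sb * sB ^ 2 * sA ^ 4)
        = (245 * sA ^ 3 * sB ^ 2) * (sb * sA) := by ring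
    _ ≤ (245 * sA ^ 3 * sB ^ 2) * (3 * (sa * sB)) :=
        mul_le_mul_of_nonneg_left hkey2 (by positivity)
    _ = 735 * (sa * sA ^ 3 * sB ^ 3) := by ring
  calc sa * (5 * sA ^ 2) * (49 * (sB ^ 2) ^ 2) + sb * (5 * sB ^ 2) * (49 * (sA ^ 2) ^ 2)
      = 245 * (sa * sA ^ 2 * sB ^ 4) + 245 * (sb * sB ^ 2 * sA ^ 4) := by ring
  _ ≤ 735 * (sa * sA ^ 3 * sB ^ 3) + 735 * (sa * sA ^ 3 * sB ^ 3) := add_le_add t1 t2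
  _ = 1470 * sa * (sA ^ 2 * sA) * (sB ^ 2 * sB) := by ring
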